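/- Let (Ω, 𝒜) be a measurable space and let K : Ω → 𝒦′(ℂⁿ) be a random compact set. Then the Siciak extremal function of K is a random function: for every z ∈ ℂⁿ, the function ω ↦ Φ_{K(ω)}(z), taking values in [0, ∞], is measurable; consequently the pluricomplex Green function ω ↦ V_{K(ω)}(z) = log Φ_{K(ω)}(z) is measurable for every z ∈ ℂⁿ. -/

import Mathlib

open TopologicalSpace MvPolynomial Metric Set

private lemma siciak_aux_lsc {n : ℕ} (z : Fin n → ℂ) :
    LowerSemicontinuous (fun A : NonemptyCompacts (Fin n → ℂ) =>
      ⨆ p ∈ {p : MvPolynomial (Fin n) ℂ |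
          1 ≤ p.totalDegree ∧ ∀ x ∈ (A : Set (Fin n → ℂ)), ‖eval x p‖ ≤ 1},
        ENNReal.ofReal (‖eval z p‖ ^ (1 / (p.totalDegree : ℝ)))) := by
  intro A t ht
  simp only [gt_iff_lt] at ht
  rw [lt_iSup_iff] at ht
  obtain ⟨p, ht⟩ := ht
  rw [lt_iSup_iff] at ht
  obtain ⟨⟨hd, hpA⟩, ht⟩ := ht
  set d := p.totalDegree with hd_def
  set v : ℝ := ‖eval z p‖ ^ (1 / (d : ℝ)) with hv_def
  have htne : t ≠ ⊤ := ht.ne_top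
  have hv0 : 0 < v := by
    by_contra h
    push_neg at h
    rw [ENNReal.ofReal_eq_zero.2 h] at ht
    exact (not_lt_of_ge (zero_le : 0 ≤ t)) ht
  have htv : t.toReal < v := by
    rwa [ENNReal.lt_ofReal_iff_toReal_lt htne] at ht
  have ht0 : (0:ℝ) ≤ t.toReal := ENNReal.toReal_nonneg
  set r : ℝ := (t.toReal + v) / 2 with hr_def
  have hr0 : 0 < r := by positivity
  have htr : t.toReal < r := by rw [hr_def]; linarith
  have hrv : r < v := by rw [hr_def]; linarith
  set c : ℝ := (r / v) ^ (d : ℕ) with hc_def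
  have hrv01 : 0 < r / v := div_pos hr0 hv0
  have hrv1 : r / v < 1 := (div_lt_one hv0).2 hrv
  have hc0 : 0 < c := pow_pos hrv01 _
  have hc1 : c < 1 := pow_lt_one₀ (le_of_lt hrv01) hrv1 (by omega)
  have hcC : (c : ℂ) ≠ 0 := by exact_mod_cast hc0.ne'
  -- the scaled polynomial
  set q : MvPolynomial (Fin n) ℂ := (c : ℂ) • p with hq_def
  have hdeg : q.totalDegree = d := by
    refine le_antisymm (totalDegree_smul_le _ _) ?_
    calc d = ((c : ℂ)⁻¹ • q).totalDegree := by
            rw [hq_def, smul_smul, inv_mul_cancel₀ hcC, one_smul]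
      _ ≤ q.totalDegree := totalDegree_smul_le _ _
  have heval : ∀ x : Fin n → ℂ, ‖eval x q‖ = c * ‖eval x p‖ := by
    intro x
    rw [hq_def, smul_eval, norm_mul, Complex.norm_real, Real.norm_eq_abs,
      abs_of_pos hc0]
  -- value of q at z
  have hval : ‖eval z q‖ ^ (1 / (q.totalDegree : ℝ)) = r := by
    rw [hdeg, heval, Real.mul_rpow (le_of_lt hc0) (norm_nonneg _), ← hv_def]
    have : c ^ (1 / (d : ℝ)) = r / v := by
      rw [hc_def, ← Real.rpow_natCast (r / v) d, ← Real.rpow_mul (le_of_lt hrv01)]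
      rw [mul_one_div, div_self (by exact_mod_cast (by omega : d ≠ 0)), Real.rpow_one]
    rw [this, div_mul_cancel₀ _ hv0.ne']
  have htq : t < ENNReal.ofReal (‖eval z q‖ ^ (1 / (q.totalDegree : ℝ))) := by
    rw [hval, ENNReal.lt_ofReal_iff_toReal_lt htne]; exact htr
  -- find a neighborhood of A where q is admissible
  set U : Set (Fin n → ℂ) := {x | ‖eval x p‖ < c⁻¹} with hU_def
  have hUopen : IsOpen U :=
    isOpen_lt (continuous_norm.comp (MvPolynomial.continuous_eval p)) continuous_const
  have hAU : (A : Set (Fin n → ℂ)) ⊆ U := fun x hx =>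
    lt_of_le_of_lt (hpA x hx) (by rw [← inv_one]; exact inv_strictAnti₀ hc0 hc1)
  obtain ⟨δ, hδ0, hδ⟩ := A.isCompact.exists_thickening_subset_open hUopen hAU
  filter_upwards [Metric.ball_mem_nhds A hδ0] with B hB
  have hqB : 1 ≤ q.totalDegree ∧ ∀ x ∈ (B : Set (Fin n → ℂ)), ‖eval x q‖ ≤ 1 := by
    refine ⟨hdeg ▸ hd, fun x hx => ?_⟩
    have hxth : x ∈ Metric.thickening δ (A : Set (Fin n → ℂ)) := by
      rw [Metric.mem_thickening_iff_infDist_lt A.nonempty]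
      calc Metric.infDist x (A : Set (Fin n → ℂ))
          ≤ Metric.hausdorffDist (B : Set (Fin n → ℂ)) A :=
            Metric.infDist_le_hausdorffDist_of_mem hx (Metric.hausdorffEdist_ne_top_of_nonempty_of_bounded B.nonempty A.nonempty
              B.isCompact.isBounded A.isCompact.isBounded)
        _ = dist B A := (NonemptyCompacts.dist_eq).symm
        _ < δ := hB
    have hxU : ‖eval x p‖ < c⁻¹ := hδ hxth
    rw [heval]
    calc c * ‖eval x p‖ ≤ c * c⁻¹ := by
          exact mul_le_mul_of_nonneg_left (le_of_lt hxU) (le_of_lt hc0)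
      _ = 1 := mul_inv_cancel₀ hc0.ne'
  calc t < ENNReal.ofReal (‖eval z q‖ ^ (1 / (q.totalDegree : ℝ))) := htq
    _ ≤ ⨆ p ∈ {p : MvPolynomial (Fin n) ℂ |
          1 ≤ p.totalDegree ∧ ∀ x ∈ (B : Set (Fin n → ℂ)), ‖eval x p‖ ≤ 1},
        ENNReal.ofReal (‖eval z p‖ ^ (1 / (p.totalDegree : ℝ))) :=
      le_iSup₂ (f := fun p _ => ENNReal.ofReal (‖eval z p‖ ^ (1 / (p.totalDegree : ℝ)))) q hqB

/-- Theorem `siciak` of the paper. Let `(Ω, 𝒜)` be a measurable space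
and `K : Ω → 𝒦′(ℂⁿ)` a random compact set. Then the Siciak extremal function
`Φ_{K(ω)}(z) = sup { |p z|^(1/deg p) : deg p ≥ 1, sup_{x ∈ K ω} |p x| ≤ 1 }`, with values
in `[0, ∞]`, is a random function: for every `z`, `ω ↦ Φ_{K(ω)}(z)` is measurable;
consequently the pluricomplex Green function `ω ↦ V_{K(ω)}(z) = log Φ_{K(ω)}(z)` is
measurable for every `z`. -/
theorem siciak_extremal_function_random
    {Ω : Type*} [MeasurableSpace Ω] {n : ℕ}
    [MeasurableSpace (NonemptyCompacts (Fin n → ℂ))]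
    [BorelSpace (NonemptyCompacts (Fin n → ℂ))]
    (K : Ω → NonemptyCompacts (Fin n → ℂ)) (hK : Measurable K)
    (z : Fin n → ℂ) :
    Measurable (fun ω =>
      ⨆ p ∈ {p : MvPolynomial (Fin n) ℂ |
          1 ≤ p.totalDegree ∧ ∀ x ∈ (K ω : Set (Fin n → ℂ)), ‖eval x p‖ ≤ 1},
        ENNReal.ofReal (‖eval z p‖ ^ (1 / (p.totalDegree : ℝ)))) ∧
    Measurable (fun ω => ENNReal.log
      (⨆ p ∈ {p : MvPolynomial (Fin n) ℂ |
          1 ≤ p.totalDegree ∧ ∀ x ∈ (K ω : Set (Fin n → ℂ)), ‖eval x p‖ ≤ 1},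
        ENNReal.ofReal (‖eval z p‖ ^ (1 / (p.totalDegree : ℝ))))) := by
  have hF : Measurable (fun A : NonemptyCompacts (Fin n → ℂ) =>
      ⨆ p ∈ {p : MvPolynomial (Fin n) ℂ |
          1 ≤ p.totalDegree ∧ ∀ x ∈ (A : Set (Fin n → ℂ)), ‖eval x p‖ ≤ 1},
        ENNReal.ofReal (‖eval z p‖ ^ (1 / (p.totalDegree : ℝ)))) :=
    (siciak_aux_lsc z).measurable
  have h1 := hF.comp hK
  exact ⟨h1, ENNReal.log_monotone.measurable.comp h1⟩
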